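/- In the drainage network on Z^2, if (x,t) is open then the ancestor cluster C(x,t) is enclosed between the two dual paths starting at the right dual neighbour r̂(x,t) and left dual neighbour l̂(x,t): every (y, t-k) ∈ C_k(x,t) satisfies ĥ^k(l̂(x,t))(1) < y < ĥ^k(r̂(x,t))(1) for 0 ≤ k < L(x,t). -/
import Mathlib


open Set

/-- One step of the dual graph: from a dual point `(u,s)` (real first coordinate, integer level)
to `((a^l(u,s) + a^r(u,s))/2, s-1)`. -/
noncomputable def dualStep (al ar : ℝ → ℤ → ℤ) : ℝ × ℤ → ℝ × ℤ :=
  fun w => (((al w.1 w.2 : ℝ) + (ar w.1 w.2 : ℝ)) / 2, w.2 - 1)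

/-- In the drainage network on `ℤ²` (deterministic configuration `B` of open vertices, forward
map `h` to the nearest open vertex on the next level), if `(x,t)` is open then every `k`-th
generation ancestor `(y, t-k)` of `(x,t)` lies strictly between the `k`-th points of the dual
paths started at the left dual neighbour `l̂(x,t) = (x - J⁻/2, t)` and at the right dual
neighbour `r̂(x,t) = (x + J⁺/2, t)`. -/
theorem cluster_enclosed_by_dual_paths
    (B : ℤ × ℤ → Bool) (h : ℤ × ℤ → ℤ × ℤ)
    (hlevel : ∀ u, (h u).2 = u.2 + 1)
    -- on each level there are open vertices arbitrarily far to the right and to the left: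
    (hexist : ∀ x t : ℤ, (∃ k : ℤ, 0 < k ∧ B (x + k, t) = true) ∧
      (∃ k : ℤ, 0 < k ∧ B (x - k, t) = true))
    -- `h` maps to an open vertex at minimal `L¹`-distance on the next level:
    (hopen : ∀ x t : ℤ, B (h (x, t)) = true ∧
      ∀ z : ℤ, B (z, t + 1) = true → |(h (x, t)).1 - x| ≤ |z - x|)
    -- `J⁺` and `J⁻`: distances to the nearest open vertices to the right/left on the same level
    (Jp Jm : ℤ × ℤ → ℤ)
    (hJp : ∀ u, 0 < Jp u ∧ B (u.1 + Jp u, u.2) = true ∧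
      ∀ k : ℤ, 0 < k → B (u.1 + k, u.2) = true → Jp u ≤ k)
    (hJm : ∀ u, 0 < Jm u ∧ B (u.1 - Jm u, u.2) = true ∧
      ∀ k : ℤ, 0 < k → B (u.1 - k, u.2) = true → Jm u ≤ k)
    -- `a^l(u,s)`: rightmost open vertex on level `s-1` whose progeny lies strictly left of `u`;
    -- `a^r(u,s)`: leftmost open vertex on level `s-1` whose progeny lies strictly right of `u`:
    (al ar : ℝ → ℤ → ℤ)
    (hal : ∀ (u : ℝ) (s : ℤ), B (al u s, s - 1) = true ∧ ((h (al u s, s - 1)).1 : ℝ) < u ∧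
      ∀ z : ℤ, B (z, s - 1) = true → ((h (z, s - 1)).1 : ℝ) < u → z ≤ al u s)
    (har : ∀ (u : ℝ) (s : ℤ), B (ar u s, s - 1) = true ∧ u < ((h (ar u s, s - 1)).1 : ℝ) ∧
      ∀ z : ℤ, B (z, s - 1) = true → u < ((h (z, s - 1)).1 : ℝ) → ar u s ≤ z)
    (x t : ℤ) (hxt : B (x, t) = true) :
    ∀ (k : ℕ) (y : ℤ), B (y, t - (k : ℤ)) = true → h^[k] (y, t - (k : ℤ)) = (x, t) →
      ((dualStep al ar)^[k] ((x : ℝ) - (Jm (x, t) : ℝ) / 2, t)).1 < (y : ℝ) ∧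
      (y : ℝ) < ((dualStep al ar)^[k] ((x : ℝ) + (Jp (x, t) : ℝ) / 2, t)).1 := by
  -- paths do not cross
  have mono : ∀ (s z1 z2 : ℤ), z1 < z2 → (h (z1, s)).1 ≤ (h (z2, s)).1 := by
    intro s z1 z2 hz
    by_contra hc
    push_neg at hc
    have hb : B ((h (z2, s)).1, s + 1) = true := by
      have h1 := (hopen z2 s).1
      have h2 := hlevel (z2, s)
      rwa [show h (z2, s) = ((h (z2, s)).1, s + 1) from Prod.ext rfl h2] at h1
    have ha : B ((h (z1, s)).1, s + 1) = true := by
      have h1 := (hopen z1 s).1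
      have h2 := hlevel (z1, s)
      rwa [show h (z1, s) = ((h (z1, s)).1, s + 1) from Prod.ext rfl h2] at h1
    have c1 := (hopen z1 s).2 _ hb
    have c2 := (hopen z2 s).2 _ ha
    simp only [Int.abs_eq_natAbs] at c1 c2
    omega
  have alar : ∀ (u : ℝ) (s : ℤ), al u s < ar u s := by
    intro u s
    rcases lt_trichotomy (al u s) (ar u s) with hlt | heq | hgt
    · exact hlt
    · exact absurd (lt_trans (heq ▸ (hal u s).2.1) (har u s).2.1) (lt_irrefl _)
    · have := mono (s - 1) _ _ hgt
      have h1 := (hal u s).2.1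
      have h2 := (har u s).2.1
      have : ((h (ar u s, s - 1)).1 : ℝ) ≤ ((h (al u s, s - 1)).1 : ℝ) := by exact_mod_cast this
      linarith
  have dlevel : ∀ (k : ℕ) (p : ℝ × ℤ), ((dualStep al ar)^[k] p).2 = p.2 - k := by
    intro k
    induction k with
    | zero => intro p; simp
    | succ k ih =>
      intro p
      rw [Function.iterate_succ_apply']
      simp only [dualStep, ih p]
      push_cast
      ring
  intro k
  induction k with
  | zero =>
    intro y hy hy2
    simp only [Function.iterate_zero, id_eq] at hy2
    have hyx : y = x := congrArg Prod.fst hy2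
    subst hyx
    have h1 := (hJm (y, t)).1
    have h2 := (hJp (y, t)).1
    have h1' : (0 : ℝ) < (Jm (y, t) : ℝ) := by exact_mod_cast h1
    have h2' : (0 : ℝ) < (Jp (y, t) : ℝ) := by exact_mod_cast h2
    simp only [Function.iterate_zero, id_eq]
    constructor <;> [linarith; linarith]
  | succ k ih =>
    intro y hy hhk
    set y' := (h (y, t - ((k : ℤ) + 1))).1 with hy'def
    have hcast : t - ((k + 1 : ℕ) : ℤ) = t - ((k : ℤ) + 1) := by push_cast; ring
    rw [hcast] at hy hhk
    have hstep : h (y, t - ((k : ℤ) + 1)) = (y', t - (k : ℤ)) := by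
      refine Prod.ext rfl ?_
      have := hlevel (y, t - ((k : ℤ) + 1))
      simpa using by omega
    have hy'open : B (y', t - (k : ℤ)) = true := by
      have h1 := (hopen y (t - ((k : ℤ) + 1))).1
      rwa [hstep] at h1
    have hhk' : h^[k] (y', t - (k : ℤ)) = (x, t) := by
      rw [Function.iterate_succ_apply, hstep] at hhk
      exact hhk
    obtain ⟨ihL, ihR⟩ := ih y' hy'open hhk'
    set L := ((dualStep al ar)^[k] ((x : ℝ) - (Jm (x, t) : ℝ) / 2, t)).1 with hL
    set R := ((dualStep al ar)^[k] ((x : ℝ) + (Jp (x, t) : ℝ) / 2, t)).1 with hR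
    have hLlev : ((dualStep al ar)^[k] ((x : ℝ) - (Jm (x, t) : ℝ) / 2, t)).2 = t - (k : ℤ) :=
      dlevel k _
    have hRlev : ((dualStep al ar)^[k] ((x : ℝ) + (Jp (x, t) : ℝ) / 2, t)).2 = t - (k : ℤ) :=
      dlevel k _
    have hyB : B (y, (t - (k : ℤ)) - 1) = true := by
      have : (t - (k : ℤ)) - 1 = t - ((k : ℤ) + 1) := by ring
      rw [this]; exact hy
    have hcoord : h (y, (t - (k : ℤ)) - 1) = (y', t - (k : ℤ)) := by
      have : (t - (k : ℤ)) - 1 = t - ((k : ℤ) + 1) := by ring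
      rw [this]; exact hstep
    rw [Function.iterate_succ_apply', Function.iterate_succ_apply']
    simp only [dualStep, ← hL, ← hR, hLlev, hRlev]
    constructor
    · -- left bound: (al L + ar L)/2 < y
      have hry : ar L (t - (k : ℤ)) ≤ y := by
        refine (har L (t - (k : ℤ))).2.2 y hyB ?_
        rw [hcoord]
        exact ihL
      have halr := alar L (t - (k : ℤ))
      have h1 : ((al L (t - (k : ℤ)) : ℝ)) < (ar L (t - (k : ℤ)) : ℝ) := by exact_mod_cast halr
      have h2 : ((ar L (t - (k : ℤ)) : ℝ)) ≤ (y : ℝ) := by exact_mod_cast hry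
      linarith
    · -- right bound: y < (al R + ar R)/2
      have hly : y ≤ al R (t - (k : ℤ)) := by
        refine (hal R (t - (k : ℤ))).2.2 y hyB ?_
        rw [hcoord]
        exact ihR
      have halr := alar R (t - (k : ℤ))
      have h1 : ((al R (t - (k : ℤ)) : ℝ)) < (ar R (t - (k : ℤ)) : ℝ) := by exact_mod_cast halr
      have h2 : ((y : ℝ)) ≤ (al R (t - (k : ℤ)) : ℝ) := by exact_mod_cast hly
      linarith
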